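/- Let L be a split δ Jordan-Lie algebra with symmetric root system Λ and α ∈ Λ. Then the subalgebra L_{Λ_α} = H_{Λ_α} ⊕ V_{Λ_α}, where H_{Λ_α} = span{[L_β, L_{-β}] : β ∈ Λ_α} and V_{Λ_α} = ⊕_{β∈Λ_α} L_β, is an ideal of L. -/
import Mathlib


/-- A δ Jordan-Lie algebra: a vector space with a bilinear bracket satisfying
`[x,y] = -δ[y,x]` and `[x,[y,z]] = δ[[x,y],z] + δ[y,[x,z]]` with `δ = ±1`. -/
structure DeltaJordanLie (K L : Type*) [Field K] [AddCommGroup L] [Module K L] where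
  br : L →ₗ[K] L →ₗ[K] L
  delta : K
  delta_pm : delta = 1 ∨ delta = -1
  anti : ∀ x y : L, br x y = -(delta • br y x)
  jacobi : ∀ x y z : L, br x (br y z) = delta • br (br x y) z + delta • br y (br x z)

variable {K L : Type*} [Field K] [AddCommGroup L] [Module K L]

/-- The root space `L_α = {v ∈ L : [h,v] = α(h)v for all h ∈ H}`. -/
def DeltaJordanLie.rootSpace (J : DeltaJordanLie K L) (H : Submodule K L)
    (α : Module.Dual K H) : Submodule K L where
  carrier := {v : L | ∀ h : H, J.br (h : L) v = α h • v}
  zero_mem' := by intro h; simp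
  add_mem' := by intro a b ha hb h; simp [ha h, hb h, smul_add]
  smul_mem' := by intro c a ha h; rw [map_smul, ha h, smul_comm]

/-- The root system `Λ = {α ∈ H* \ {0} : L_α ≠ 0}`. -/
def DeltaJordanLie.roots (J : DeltaJordanLie K L) (H : Submodule K L) :
    Set (Module.Dual K H) :=
  {α | α ≠ 0 ∧ J.rootSpace H α ≠ ⊥}

/-- `H` is a splitting Cartan subalgebra: a maximal abelian subalgebra such that
`L` decomposes as the direct sum of the simultaneous eigenspaces `L_α`, with `L_0 = H`. -/
structure DeltaJordanLie.IsSplitting (J : DeltaJordanLie K L) (H : Submodule K L) : Prop where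
  abelian : ∀ x ∈ H, ∀ y ∈ H, J.br x y = 0
  maximal : ∀ H' : Submodule K L, H ≤ H' →
      (∀ x ∈ H', ∀ y ∈ H', J.br x y = 0) → H' = H
  zero_rootSpace : J.rootSpace H 0 = H
  indep : iSupIndep (fun α : Module.Dual K H => J.rootSpace H α)
  decomp : (⨆ α : Module.Dual K H, J.rootSpace H α) = ⊤

/-- The root system is symmetric. -/
def DeltaJordanLie.SymmetricRoots (J : DeltaJordanLie K L) (H : Submodule K L) : Prop :=
  ∀ α ∈ J.roots H, -α ∈ J.roots H

/-- The δ-twisted partial sums of a sequence of roots: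
`s₀ = f 0`, `s_{k+1} = δ • (s_k + f (k+1))`, so that
`s_k = δ^k f 0 + δ^k f 1 + δ^{k-1} f 2 + ⋯ + δ f k`. -/
def connSum {H : Submodule K L} (d : K) (f : ℕ → Module.Dual K H) : ℕ → Module.Dual K H
  | 0 => f 0
  | k + 1 => d • (connSum d f k + f (k + 1))

/-- `f 0, …, f n` is a connection from `α` to `β`: all terms are roots, `f 0 = α`,
all proper δ-twisted partial sums are roots, and the final sum is `±β`. -/
def IsConnection (J : DeltaJordanLie K L) (H : Submodule K L)
    (α β : Module.Dual K H) (n : ℕ) (f : ℕ → Module.Dual K H) : Prop :=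
  (∀ i ≤ n, f i ∈ J.roots H) ∧ f 0 = α ∧
  (∀ k < n, connSum J.delta f k ∈ J.roots H) ∧
  (connSum J.delta f n = β ∨ connSum J.delta f n = -β)

/-- `α` and `β` are connected. -/
def Connected (J : DeltaJordanLie K L) (H : Submodule K L)
    (α β : Module.Dual K H) : Prop :=
  ∃ n f, IsConnection J H α β n f

/-- `Λ_α`: the set of nonzero roots connected to `α`. -/
def connectedRoots (J : DeltaJordanLie K L) (H : Submodule K L)
    (α : Module.Dual K H) : Set (Module.Dual K H) :=
  {β ∈ J.roots H | Connected J H α β}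

/-- An ideal of a δ Jordan-Lie algebra: a submodule with `[I,L] ⊆ I` and `[L,I] ⊆ I`. -/
def IsIdeal (J : DeltaJordanLie K L) (I : Submodule K L) : Prop :=
  ∀ x ∈ I, ∀ y : L, J.br x y ∈ I ∧ J.br y x ∈ I

/-- `H_S = span{[L_β, L_{-β}] : β ∈ S}`. -/
def rootSpan (J : DeltaJordanLie K L) (H : Submodule K L)
    (S : Set (Module.Dual K H)) : Submodule K L :=
  Submodule.span K {z : L | ∃ β ∈ S, ∃ x ∈ J.rootSpace H β, ∃ y ∈ J.rootSpace H (-β),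
    z = J.br x y}

/-- `L_S = H_S ⊕ V_S`, the subalgebra associated to a set of roots `S`. -/
def decIdeal (J : DeltaJordanLie K L) (H : Submodule K L)
    (S : Set (Module.Dual K H)) : Submodule K L :=
  rootSpan J H S ⊔ ⨆ β ∈ S, J.rootSpace H β

lemma delta_sq (J : DeltaJordanLie K L) : J.delta * J.delta = 1 := by
  rcases J.delta_pm with h | h <;> rw [h] <;> ring

lemma delta_ne (J : DeltaJordanLie K L) : J.delta ≠ 0 := by
  rcases J.delta_pm with h | h <;> rw [h] <;> simp

lemma bracket_rootSpace (J : DeltaJordanLie K L) (H : Submodule K L)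
    {β γ : Module.Dual K H} {u v : L} (hu : u ∈ J.rootSpace H β) (hv : v ∈ J.rootSpace H γ) :
    J.br u v ∈ J.rootSpace H (J.delta • (β + γ)) := by
  intro h
  have hj := J.jacobi (h : L) u v
  rw [hu h, hv h] at hj
  rw [hj]
  simp only [map_smul, LinearMap.smul_apply, LinearMap.add_apply, smul_smul, smul_eq_mul]
  rw [mul_add, add_smul]

lemma connSum_congr {H : Submodule K L} (d : K) (f g : ℕ → Module.Dual K H) (n : ℕ)
    (h : ∀ i ≤ n, g i = f i) : ∀ k ≤ n, connSum d g k = connSum d f k := by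
  intro k hk
  induction k with
  | zero => exact h 0 (Nat.zero_le n)
  | succ k ih =>
    rw [connSum, connSum, ih (by omega), h (k + 1) hk]

lemma neg_mem_connectedRoots (J : DeltaJordanLie K L) (H : Submodule K L)
    (hsym : J.SymmetricRoots H) {α β : Module.Dual K H}
    (hβ : β ∈ connectedRoots J H α) : -β ∈ connectedRoots J H α := by
  obtain ⟨hβr, n, f, hall, hf0, hmid, hend⟩ := hβ
  refine ⟨hsym β hβr, n, f, hall, hf0, hmid, ?_⟩
  rcases hend with h | h
  · exact Or.inr (h.trans (neg_neg β).symm)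
  · exact Or.inl h

lemma conn_ext (J : DeltaJordanLie K L) (H : Submodule K L)
    (hsym : J.SymmetricRoots H) {α β γ : Module.Dual K H}
    (hβ : β ∈ connectedRoots J H α) (hγ : γ ∈ J.roots H)
    (hroot : J.delta • (β + γ) ∈ J.roots H) :
    J.delta • (β + γ) ∈ connectedRoots J H α := by
  obtain ⟨hβr, n, f, hall, hf0, hmid, hend⟩ := hβ
  refine ⟨hroot, ?_⟩
  have hmid' : ∀ k < n + 1, connSum J.delta f k ∈ J.roots H := by
    intro k hk
    rcases Nat.lt_or_ge k n with h | h
    · exact hmid k h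
    · have hkn : k = n := by omega
      subst hkn
      rcases hend with h | h
      · rw [h]; exact hβr
      · rw [h]; exact hsym β hβr
  rcases hend with hend | hend
  · refine ⟨n + 1, fun i => if i ≤ n then f i else γ, ?_, ?_, ?_, ?_⟩
    · intro i hi
      by_cases h : i ≤ n
      · simpa [h] using hall i h
      · simpa [h] using hγ
    · simpa using hf0
    · intro k hk
      have hk' : k ≤ n := by omega
      rw [connSum_congr J.delta f _ n (fun i hi => if_pos hi) k hk']
      exact hmid' k hk
    · left
      rw [connSum, connSum_congr J.delta f _ n (fun i hi => if_pos hi) n le_rfl,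
        hend, if_neg (by omega)]
  · refine ⟨n + 1, fun i => if i ≤ n then f i else -γ, ?_, ?_, ?_, ?_⟩
    · intro i hi
      by_cases h : i ≤ n
      · simpa [h] using hall i h
      · simpa [h] using hsym γ hγ
    · simpa using hf0
    · intro k hk
      have hk' : k ≤ n := by omega
      rw [connSum_congr J.delta f _ n (fun i hi => if_pos hi) k hk']
      exact hmid' k hk
    · right
      rw [connSum, connSum_congr J.delta f _ n (fun i hi => if_pos hi) n le_rfl,
        hend, if_neg (by omega), ← neg_add, smul_neg]

lemma rootSpace_le_decIdeal (J : DeltaJordanLie K L) (H : Submodule K L)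
    {S : Set (Module.Dual K H)} {γ : Module.Dual K H} (hγ : γ ∈ S) :
    J.rootSpace H γ ≤ decIdeal J H S :=
  le_trans (le_iSup₂ (f := fun β (_ : β ∈ S) => J.rootSpace H β) γ hγ) le_sup_right

lemma key_mem (J : DeltaJordanLie K L) (H : Submodule K L) (hs : J.IsSplitting H)
    (hsym : J.SymmetricRoots H) {α β γ : Module.Dual K H}
    (hβ : β ∈ connectedRoots J H α) {w y : L}
    (hw : w ∈ J.rootSpace H β) (hy : y ∈ J.rootSpace H γ) :
    J.br w y ∈ decIdeal J H (connectedRoots J H α) := by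
  by_cases hγ0 : γ = 0
  · subst hγ0
    have hyH : y ∈ H := hs.zero_rootSpace ▸ hy
    have h2 : J.br y w = β ⟨y, hyH⟩ • w := hw ⟨y, hyH⟩
    rw [J.anti w y, h2]
    exact Submodule.neg_mem _ (Submodule.smul_mem _ _ (Submodule.smul_mem _ _
      (rootSpace_le_decIdeal J H hβ hw)))
  · by_cases hz : J.br w y = 0
    · rw [hz]; exact zero_mem _
    · have hbr := bracket_rootSpace J H hw hy
      have hyne : y ≠ 0 := fun h => hz (by rw [h, map_zero])
      have hγr : γ ∈ J.roots H := ⟨hγ0, (Submodule.ne_bot_iff _).mpr ⟨y, hy, hyne⟩⟩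
      by_cases h0 : J.delta • (β + γ) = 0
      · have hγβ : γ = -β := by
          rcases smul_eq_zero.mp h0 with h | h
          · exact absurd h (delta_ne J)
          · exact eq_neg_of_add_eq_zero_right h
        exact Submodule.mem_sup_left
          (Submodule.subset_span ⟨β, hβ, w, hw, y, hγβ ▸ hy, rfl⟩)
      · have hroot : J.delta • (β + γ) ∈ J.roots H :=
          ⟨h0, (Submodule.ne_bot_iff _).mpr ⟨_, hbr, hz⟩⟩
        exact rootSpace_le_decIdeal J H (conn_ext J H hsym hβ hγr hroot) hbr

lemma mem_of_rootSpace_le (J : DeltaJordanLie K L) {H : Submodule K L}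
    (hs : J.IsSplitting H) (p : Submodule K L)
    (h : ∀ γ : Module.Dual K H, J.rootSpace H γ ≤ p) (y : L) : y ∈ p := by
  have : (⊤ : Submodule K L) ≤ p := hs.decomp ▸ iSup_le h
  exact this trivial

/-- the subalgebra `L_{Λ_α} = H_{Λ_α} ⊕ V_{Λ_α}` is an ideal of `L`. -/
theorem stmt7 (J : DeltaJordanLie K L) (H : Submodule K L) (hs : J.IsSplitting H)
    (hsym : J.SymmetricRoots H) (α : Module.Dual K H) (hα : α ∈ J.roots H) :
    IsIdeal J (decIdeal J H (connectedRoots J H α)) := by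
  set I := decIdeal J H (connectedRoots J H α) with hIdef
  have main : ∀ x ∈ I, ∀ y : L, J.br x y ∈ I := by
    have hle : I ≤
        { carrier := {x : L | ∀ y : L, J.br x y ∈ I}
          zero_mem' := by intro y; simp
          add_mem' := by
            intro a b ha hb y
            rw [map_add, LinearMap.add_apply]
            exact add_mem (ha y) (hb y)
          smul_mem' := by
            intro c a ha y
            rw [map_smul, LinearMap.smul_apply]
            exact Submodule.smul_mem _ _ (ha y) } := by
      refine sup_le ?_ ?_
      · rw [rootSpan, Submodule.span_le]
        rintro z ⟨β, hβ, u, hu, v, hv, rfl⟩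
        intro y
        refine mem_of_rootSpace_le J hs
          { carrier := {y : L | J.br (J.br u v) y ∈ I}
            zero_mem' := by simp
            add_mem' := by
              intro a b ha hb
              rw [Set.mem_setOf_eq, map_add]
              exact add_mem ha hb
            smul_mem' := by
              intro c a ha
              rw [Set.mem_setOf_eq, map_smul]
              exact Submodule.smul_mem _ _ ha } ?_ y
        intro γ y hy
        have hid : J.br (J.br u v) y =
            J.delta • J.br u (J.br v y) - J.br v (J.br u y) := by
          have hj := J.jacobi u v y
          have h1 : J.delta • J.br (J.br u v) y =
              J.br u (J.br v y) - J.delta • J.br v (J.br u y) :=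
            eq_sub_of_add_eq hj.symm
          calc J.br (J.br u v) y = (J.delta * J.delta) • J.br (J.br u v) y := by
                rw [delta_sq, one_smul]
            _ = J.delta • (J.delta • J.br (J.br u v) y) := by rw [mul_smul]
            _ = J.delta • J.br u (J.br v y) - J.br v (J.br u y) := by
                rw [h1, smul_sub, smul_smul, delta_sq, one_smul]
        show J.br (J.br u v) y ∈ I
        rw [hid]
        refine sub_mem (Submodule.smul_mem _ _ ?_) ?_
        · exact key_mem J H hs hsym hβ hu (bracket_rootSpace J H hv hy)
        · exact key_mem J H hs hsym (neg_mem_connectedRoots J H hsym hβ) hv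
            (bracket_rootSpace J H hu hy)
      · refine iSup₂_le ?_
        intro β hβ w hw
        intro y
        refine mem_of_rootSpace_le J hs
          { carrier := {y : L | J.br w y ∈ I}
            zero_mem' := by simp
            add_mem' := by
              intro a b ha hb
              rw [Set.mem_setOf_eq, map_add]
              exact add_mem ha hb
            smul_mem' := by
              intro c a ha
              rw [Set.mem_setOf_eq, map_smul]
              exact Submodule.smul_mem _ _ ha } ?_ y
        intro γ y hy
        exact key_mem J H hs hsym hβ hw hy
    intro x hx y
    exact hle hx y
  intro x hx y
  refine ⟨main x hx y, ?_⟩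
  rw [J.anti y x]
  exact Submodule.neg_mem _ (Submodule.smul_mem _ _ (main x hx y))
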